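/- Let X be a Banach lattice, let x ∈ X with ‖x‖ = 1 and let x* be a continuous linear functional on X with ‖x*‖ = 1 such that x*(x) = 1. Then for every y ∈ X with 0 ≤ y ≤ x⁻ one has x*(y) ≤ 0, and for every y ∈ X with 0 ≤ y ≤ x⁺ one has x*(y) ≥ 0. (By the Riesz–Kantorovich formulas these two conditions say exactly that x*⁺(x⁻) = 0 = x*⁻(x⁺).) -/

import Mathlib

/-- In a Banach lattice `X`, if `x ∈ S_X`, `x* ∈ S_{X*}` and `x*(x) = 1`,
then `x*` is nonpositive on the order interval `[0, x⁻]` and nonnegative on `[0, x⁺]`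
(equivalently, by the Riesz–Kantorovich formulas, `x*⁺(x⁻) = 0 = x*⁻(x⁺)`). -/
theorem stmt0 (X : Type*) [NormedAddCommGroup X] [Lattice X] [IsOrderedAddMonoid X]
    [HasSolidNorm X] [NormedSpace ℝ X]
    [PosSMulStrictMono ℝ X] [CompleteSpace X]
    (x : X) (hx : ‖x‖ = 1) (f : X →L[ℝ] ℝ) (hf : ‖f‖ = 1) (hfx : f x = 1) :
    (∀ y : X, 0 ≤ y → y ≤ (-x) ⊔ 0 → f y ≤ 0) ∧
    (∀ y : X, 0 ≤ y → y ≤ x ⊔ 0 → 0 ≤ f y) := by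
  have key : ∀ z : X, |z| ≤ |x| → f z ≤ 1 := by
    intro z hz
    have h1 : ‖z‖ ≤ ‖x‖ := norm_le_norm_of_abs_le_abs hz
    calc f z ≤ ‖f‖ * ‖z‖ := le_trans (le_abs_self _) (f.le_opNorm z)
    _ ≤ 1 * 1 := by rw [hf]; exact mul_le_mul_of_nonneg_left (h1.trans_eq hx) zero_le_one
    _ = 1 := one_mul 1
  obtain ⟨p, hp⟩ : ∃ p, x ⊔ 0 = p := ⟨_, rfl⟩
  obtain ⟨n, hn⟩ : ∃ n, (-x) ⊔ 0 = n := ⟨_, rfl⟩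
  have hpn : p + n = |x| := by rw [← hp, ← hn]; exact posPart_add_negPart x
  have hsub : p - n = x := by rw [← hp, ← hn]; exact posPart_sub_negPart x
  have hnegle : -x ≤ |x| := neg_le_abs x
  constructor
  · intro y hy0 hy
    rw [hn] at hy
    have habs : |x + (y + y)| ≤ |x| := by
      rw [abs_le']
      refine ⟨?_, ?_⟩
      · calc x + (y + y) ≤ x + (n + n) := add_le_add_right (add_le_add hy hy) x
        _ = p + n := by rw [← hsub]; abel
        _ = |x| := hpn
      · calc -(x + (y + y)) = -x - (y + y) := by abel
        _ ≤ -x := sub_le_self _ (add_nonneg hy0 hy0)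
        _ ≤ |x| := hnegle
    have := key (x + (y + y)) habs
    rw [map_add, map_add, hfx] at this
    linarith
  · intro y hy0 hy
    rw [hp] at hy
    have habs : |x - (y + y)| ≤ |x| := by
      rw [abs_le']
      refine ⟨?_, ?_⟩
      · calc x - (y + y) ≤ x := sub_le_self x (add_nonneg hy0 hy0)
        _ ≤ |x| := le_abs_self x
      · calc -(x - (y + y)) = (y + y) - x := by abel
        _ ≤ (p + p) - x := sub_le_sub_right (add_le_add hy hy) x
        _ = p + n := by rw [← hsub]; abel
        _ = |x| := hpn
    have := key (x - (y + y)) habs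
    rw [map_sub, map_add, hfx] at this
    linarith
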